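/- Let 0 < λ < μ, let A be a nonnegative random variable with E[A] = 1/λ, let σ_A ∈ [0,1) satisfy σ_A = E[exp(−μ(1−σ_A)·A)], and let σ_D ∈ [0,1) satisfy σ_D = exp(−μ(1−σ_D)/λ). Then for every s > 0, the Laplace transform of the stationary waiting time is maximized by deterministic arrivals: μ(1−σ_D)/(μ(1−σ_D)+s) ≥ μ(1−σ_A)/(μ(1−σ_A)+s); equivalently, if W_D and W_A are exponentially distributed with rates μ(1−σ_D) and μ(1−σ_A) respectively, then E[e^{−sW_D}] ≥ E[e^{−sW_A}]. -/

import Mathlib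

open MeasureTheory

private lemma laplace_exp_aux (b s : ℝ) (hb : 0 < b) (hs : 0 < s) :
    ∫ w in Set.Ioi (0 : ℝ), b * Real.exp (-b * w) * Real.exp (-s * w) = b / (b + s) := by
  have hbs : 0 < b + s := by linarith
  have key : ∫ w in Set.Ioi (0 : ℝ), Real.exp (-(b + s) * w) = 1 / (b + s) := by
    have hderiv : ∀ x ∈ Set.Ici (0 : ℝ),
        HasDerivAt (fun x => -Real.exp (-(b + s) * x) / (b + s)) (Real.exp (-(b + s) * x)) x := by
      intro x _
      have h1 : HasDerivAt (fun x : ℝ => -(b + s) * x) (-(b + s)) x := by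
        simpa using (hasDerivAt_id x).const_mul (-(b + s))
      have h2 := (h1.exp.neg.div_const (b + s))
      refine h2.congr_deriv ?_
      rw [mul_neg, neg_neg, mul_div_assoc, div_self hbs.ne', mul_one]
    have htend : Filter.Tendsto (fun x => -Real.exp (-(b + s) * x) / (b + s))
        Filter.atTop (nhds 0) := by
      have : Filter.Tendsto (fun x => -Real.exp (-(b + s) * x) / (b + s))
          Filter.atTop (nhds (-0 / (b + s))) := by
        refine Filter.Tendsto.div_const (Filter.Tendsto.neg ?_) _
        exact Real.tendsto_exp_atBot.comp
          (Filter.tendsto_id.const_mul_atTop_of_neg (neg_neg_iff_pos.2 hbs))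
      simpa using this
    have := integral_Ioi_of_hasDerivAt_of_tendsto' hderiv (exp_neg_integrableOn_Ioi 0 hbs) htend
    simp only [mul_zero, Real.exp_zero] at this
    rw [this]
    ring
  have heq : ∀ w : ℝ, b * Real.exp (-b * w) * Real.exp (-s * w)
      = b * Real.exp (-(b + s) * w) := by
    intro w
    rw [mul_assoc, ← Real.exp_add]
    ring_nf
  simp_rw [heq]
  rw [MeasureTheory.integral_const_mul, key]
  field_simp

/-- In a stable G/M/1 queue with service rate `μ` and inter-arrival time `A ≥ 0` with mean
`1/λ`, if `σ_A` solves the fixed-point equation `σ_A = E[exp(−μ(1−σ_A)A)]` and `σ_D` solves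
the deterministic fixed-point equation `σ_D = exp(−μ(1−σ_D)/λ)`, then for every `s > 0` the
Laplace transform of the stationary waiting time is maximized by deterministic arrivals:
`μ(1−σ_D)/(μ(1−σ_D)+s) ≥ μ(1−σ_A)/(μ(1−σ_A)+s)`; equivalently, for `W_D, W_A` exponential
with rates `μ(1−σ_D)` and `μ(1−σ_A)`, `E[e^{−sW_D}] ≥ E[e^{−sW_A}]`. -/
theorem deterministic_arrivals_maximize_laplace
    {Ω : Type*} [MeasureSpace Ω] [IsProbabilityMeasure (volume : Measure Ω)]
    (lam μ : ℝ) (hlam : 0 < lam) (hlm : lam < μ)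
    (A : Ω → ℝ) (hA : ∀ ω, 0 ≤ A ω) (hAint : Integrable A)
    (hmean : ∫ ω, A ω = 1 / lam)
    (σA : ℝ) (hσA : σA ∈ Set.Ico (0 : ℝ) 1)
    (hfixA : σA = ∫ ω, Real.exp (-(μ * (1 - σA)) * A ω))
    (σD : ℝ) (hσD : σD ∈ Set.Ico (0 : ℝ) 1)
    (hfixD : σD = Real.exp (-(μ * (1 - σD)) / lam))
    (s : ℝ) (hs : 0 < s) :
    μ * (1 - σA) / (μ * (1 - σA) + s) ≤ μ * (1 - σD) / (μ * (1 - σD) + s) ∧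
    (∫ w in Set.Ioi (0 : ℝ),
        (μ * (1 - σA)) * Real.exp (-(μ * (1 - σA)) * w) * Real.exp (-s * w)) ≤
      ∫ w in Set.Ioi (0 : ℝ),
        (μ * (1 - σD)) * Real.exp (-(μ * (1 - σD)) * w) * Real.exp (-s * w) := by
  have hμ : 0 < μ := lt_trans hlam hlm
  obtain ⟨hσA0, hσA1⟩ := hσA
  obtain ⟨hσD0, hσD1⟩ := hσD
  set θA := μ * (1 - σA) with hθA
  set θD := μ * (1 - σD) with hθD
  have hθApos : 0 < θA := mul_pos hμ (by linarith)
  have hθDpos : 0 < θD := mul_pos hμ (by linarith)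
  -- Jensen: exp(-θA / lam) ≤ σA
  have hconv : ConvexOn ℝ Set.univ (fun x : ℝ => Real.exp (-θA * x)) := by
    have := convexOn_exp.comp_affineMap
      (LinearMap.toAffineMap ((-θA) • (LinearMap.id : ℝ →ₗ[ℝ] ℝ)))
    refine ConvexOn.congr this ?_
    intro x _
    simp
  have hmeas : AEStronglyMeasurable (fun ω => Real.exp (-θA * A ω)) volume := by
    exact (Real.continuous_exp.comp_aestronglyMeasurable
      (hAint.aestronglyMeasurable.const_mul (-θA)))
  have hginteg : Integrable (fun ω => Real.exp (-θA * A ω)) volume := by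
    refine Integrable.mono' (integrable_const 1) hmeas ?_
    filter_upwards with ω
    rw [Real.norm_eq_abs, abs_of_pos (Real.exp_pos _)]
    exact Real.exp_le_one_iff.2 (by nlinarith [hA ω, hθApos])
  have hjensen : Real.exp (-θA * (1 / lam)) ≤ σA := by
    rw [hfixA]
    have hj := hconv.map_integral_le
      (Continuous.continuousOn (by fun_prop)) isClosed_univ
      (Filter.Eventually.of_forall fun ω => Set.mem_univ _) hAint hginteg
    rw [hmean] at hj
    exact hj
  -- σD ≤ σA
  have hDA : σD ≤ σA := by
    by_contra hcon
    push_neg at hcon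
    set a := (1 - σD) / (1 - σA) with ha
    set b := (σD - σA) / (1 - σA) with hb
    have h1A : 0 < 1 - σA := by linarith
    have hapos : 0 < a := div_pos (by linarith) h1A
    have hbpos : 0 < b := div_pos (by linarith) h1A
    have hab : a + b = 1 := by
      rw [ha, hb, ← add_div, div_eq_one_iff_eq h1A.ne']; ring
    have u := -θA * (1 / lam)
    have hune : -θA * (1 / lam) ≠ (0 : ℝ) := by
      have : 0 < θA * (1 / lam) := mul_pos hθApos (by positivity)
      intro h; rw [neg_mul] at h; linarith
    have hstrict := strictConvexOn_exp.2 (Set.mem_univ (-θA * (1 / lam)))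
      (Set.mem_univ (0 : ℝ)) hune hapos hbpos hab
    simp only [smul_eq_mul, smul_zero, mul_zero, add_zero, Real.exp_zero, mul_one] at hstrict
    have hkey : a * (-θA * (1 / lam)) = -θD / lam := by
      rw [ha, hθA, hθD]
      field_simp
    rw [hkey] at hstrict
    have hD : σD = Real.exp (-θD / lam) := hfixD
    have : σD < a * σA + b := by
      calc σD = Real.exp (-θD / lam) := hD
        _ < a * Real.exp (-θA * (1 / lam)) + b := hstrict
        _ ≤ a * σA + b := by nlinarith [hjensen]
    have hcontra : a * σA + b = σD := by
      rw [ha, hb]; field_simp; ring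
    linarith
  have hθle : θA ≤ θD := by
    rw [hθA, hθD]
    nlinarith
  have hfirst : θA / (θA + s) ≤ θD / (θD + s) := by
    rw [div_le_div_iff₀ (by linarith) (by linarith)]
    nlinarith
  refine ⟨hfirst, ?_⟩
  rw [laplace_exp_aux θA s hθApos hs, laplace_exp_aux θD s hθDpos hs]
  exact hfirst
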